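/- Let K_Z be an arbitrary n×n symmetric positive definite real matrix. Then the function P ↦ C_FB,n(K_Z,P) is concave on (0,∞): for all P₁, P₂ > 0 and λ ∈ [0,1], C_FB,n(K_Z, λP₁ + (1-λ)P₂) ≥ λ C_FB,n(K_Z,P₁) + (1-λ) C_FB,n(K_Z,P₂). -/

import Mathlib

open MeasureTheory Real Filter Matrix

noncomputable section

/-- The `n`-block feedback capacity `C_FB,n(K_Z, P)` of Cover–Pombra. -/
def CFBn {n : ℕ} (K_Z : Matrix (Fin n) (Fin n) ℝ) (P : ℝ) : ℝ :=
  sSup {c : ℝ | ∃ K_V B : Matrix (Fin n) (Fin n) ℝ,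
    K_V.PosSemidef ∧ (∀ i j : Fin n, i ≤ j → B i j = 0) ∧
    (K_V + B * K_Z * Bᵀ).trace ≤ (n : ℝ) * P ∧
    c = (1 / (2 * (n : ℝ))) *
          Real.log ((K_V + (1 + B) * K_Z * (1 + B)ᵀ).det / K_Z.det)}

section Stmt13Aux

variable {n : ℕ}

open scoped MatrixOrder


lemma trace_eq_sum_eigs {M : Matrix (Fin n) (Fin n) ℝ} (hM : M.IsHermitian) :
    M.trace = ∑ i, hM.eigenvalues i := by
  conv_lhs => rw [hM.spectral_theorem]
  rw [Unitary.conjStarAlgAut_apply, Matrix.trace_mul_cycle]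
  have h : (star hM.eigenvectorUnitary.1) * hM.eigenvectorUnitary.1 = 1 :=
    Matrix.mem_unitaryGroup_iff'.mp hM.eigenvectorUnitary.2
  rw [h, Matrix.one_mul, Matrix.trace_diagonal]
  simp

lemma psd_smul {A : Matrix (Fin n) (Fin n) ℝ} (hA : A.PosSemidef) {c : ℝ} (hc : 0 ≤ c) :
    (c • A).PosSemidef := by
  refine Matrix.posSemidef_iff_dotProduct_mulVec.mpr ⟨?_, ?_⟩
  · unfold Matrix.IsHermitian
    rw [Matrix.conjTranspose_smul, hA.1]
    simp
  · intro x
    have := hA.dotProduct_mulVec_nonneg x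
    simp only [Matrix.smul_mulVec, dotProduct_smul, smul_eq_mul]
    exact mul_nonneg hc this

lemma posDef_conj {K B : Matrix (Fin n) (Fin n) ℝ} (hK : K.PosDef) (hB : IsUnit B.det) :
    (B * K * Bᵀ).PosDef := by
  refine Matrix.posDef_iff_dotProduct_mulVec.mpr ⟨?_, ?_⟩
  · have := Matrix.isHermitian_mul_mul_conjTranspose B hK.1
    rwa [Matrix.conjTranspose_eq_transpose_of_trivial] at this
  · intro x hx
    have hy : Bᵀ *ᵥ x ≠ 0 := by
      intro h
      apply hx
      have hu : IsUnit Bᵀ := by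
        rw [Matrix.isUnit_iff_isUnit_det, Matrix.det_transpose]; exact hB
      have hinj := Matrix.mulVec_injective_iff_isUnit.mpr hu
      exact hinj (by simpa using h)
    have hpos := hK.dotProduct_mulVec_pos hy
    have hrw : star (Bᵀ *ᵥ x) ⬝ᵥ K *ᵥ (Bᵀ *ᵥ x) = star x ⬝ᵥ (B * K * Bᵀ) *ᵥ x := by
      simp only [star_trivial, Matrix.mulVec_mulVec]
      rw [Matrix.mulVec_transpose, Matrix.dotProduct_mulVec, Matrix.dotProduct_mulVec,
        Matrix.vecMul_vecMul, Matrix.mul_assoc]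
    rwa [hrw] at hpos

lemma det_eq_prod_eigs {M : Matrix (Fin n) (Fin n) ℝ} (hM : M.IsHermitian) :
    M.det = ∏ i, hM.eigenvalues i := by
  rw [hM.det_eq_prod_eigenvalues]; norm_num

lemma psd_det_nonneg {M : Matrix (Fin n) (Fin n) ℝ} (hM : M.PosSemidef) : 0 ≤ M.det := by
  rw [det_eq_prod_eigs hM.1]
  exact Finset.prod_nonneg fun i _ => hM.eigenvalues_nonneg i

lemma logdet_concave {A C : Matrix (Fin n) (Fin n) ℝ} (hA : A.PosDef) (hC : C.PosDef)
    {t : ℝ} (ht0 : 0 ≤ t) (ht1 : t ≤ 1) :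
    t * Real.log A.det + (1 - t) * Real.log C.det ≤ Real.log (t • A + (1 - t) • C).det := by
  classical
  set S := CFC.sqrt A with hSdef
  have hS : S.PosSemidef := (CFC.sqrt_nonneg A).posSemidef
  have hSS : S * S = A := CFC.sqrt_mul_sqrt_self A hA.posSemidef.nonneg
  have hSsym : Sᵀ = S := by
    rw [← Matrix.conjTranspose_eq_transpose_of_trivial]
    exact hS.1
  have hdetSS : S.det * S.det = A.det := by rw [← Matrix.det_mul, hSS]
  have hdetS : 0 < S.det := by
    rcases (psd_det_nonneg hS).lt_or_eq with h | h
    · exact h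
    · exfalso; have := hA.det_pos; rw [← hdetSS, ← h] at this; simp at this
  have hSU : IsUnit S.det := isUnit_iff_ne_zero.mpr hdetS.ne'
  have hSi1 : S * S⁻¹ = 1 := Matrix.mul_nonsing_inv _ hSU
  have hSi2 : S⁻¹ * S = 1 := Matrix.nonsing_inv_mul _ hSU
  have hSiT : (S⁻¹)ᵀ = S⁻¹ := by rw [Matrix.transpose_nonsing_inv, hSsym]
  have hSiU : IsUnit (S⁻¹).det := by
    rw [Matrix.det_nonsing_inv]
    exact isUnit_iff_ne_zero.mpr (by simpa using hdetS.ne')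
  set M := S⁻¹ * C * (S⁻¹)ᵀ with hMdef
  have hM : M.PosDef := posDef_conj hC hSiU
  have hSMS : S * M * S = C := by
    rw [hMdef, hSiT, show S * (S⁻¹ * C * S⁻¹) * S = S * S⁻¹ * C * (S⁻¹ * S) by noncomm_ring,
      hSi1, hSi2, Matrix.one_mul, Matrix.mul_one]
  set N := t • (1 : Matrix (Fin n) (Fin n) ℝ) + (1 - t) • M with hNdef
  have key : t • A + (1 - t) • C = S * N * S := by
    rw [hNdef, Matrix.mul_add, Matrix.add_mul, Matrix.mul_smul, Matrix.smul_mul,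
      Matrix.mul_smul, Matrix.smul_mul, Matrix.mul_one, hSS, hSMS]
  -- eigen decomposition of M
  have hMh : M.IsHermitian := hM.1
  set U := hMh.eigenvectorUnitary.1 with hUdef
  have hUU : U * star U = 1 := Matrix.mem_unitaryGroup_iff.mp hMh.eigenvectorUnitary.2
  have hevpos : ∀ i, 0 < hMh.eigenvalues i := fun i => hM.eigenvalues_pos i
  have hfac : ∀ i, 0 < t + (1 - t) * hMh.eigenvalues i := by
    intro i
    rcases eq_or_lt_of_le ht0 with h | h
    · rw [← h]; simpa using hevpos i
    · have := mul_nonneg (sub_nonneg.2 ht1) (hevpos i).le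
      linarith
  have hNdiag : N = U * (diagonal fun i => t + (1 - t) * hMh.eigenvalues i) * star U := by
    have hsp : M = U * diagonal (RCLike.ofReal ∘ hMh.eigenvalues) * star U := hMh.spectral_theorem
    have hdd : (diagonal fun i => t + (1 - t) * hMh.eigenvalues i)
        = t • (1 : Matrix (Fin n) (Fin n) ℝ)
          + (1 - t) • diagonal (RCLike.ofReal ∘ hMh.eigenvalues) := by
      rw [← Matrix.diagonal_one, ← Matrix.diagonal_smul, ← Matrix.diagonal_smul,
        Matrix.diagonal_add]
      funext i
      simp
    rw [hdd, Matrix.mul_add, Matrix.add_mul, Matrix.mul_smul, Matrix.smul_mul,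
      Matrix.mul_smul, Matrix.smul_mul, Matrix.mul_one, hUU, ← hsp, hNdef]
  have hdetN : N.det = ∏ i, (t + (1 - t) * hMh.eigenvalues i) := by
    rw [hNdiag, Matrix.det_mul_right_comm, hUU, Matrix.one_mul, Matrix.det_diagonal]
  have hdetNpos : 0 < N.det := by
    rw [hdetN]; exact Finset.prod_pos fun i _ => hfac i
  have hlogN : (1 - t) * Real.log M.det ≤ Real.log N.det := by
    rw [hdetN, Real.log_prod (fun i _ => (hfac i).ne'), det_eq_prod_eigs hMh,
      Real.log_prod (fun i _ => (hevpos i).ne'), Finset.mul_sum]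
    refine Finset.sum_le_sum fun i _ => ?_
    have := strictConcaveOn_log_Ioi.concaveOn.2 (Set.mem_Ioi.2 one_pos)
      (Set.mem_Ioi.2 (hevpos i)) ht0 (sub_nonneg.2 ht1) (by ring)
    simpa [smul_eq_mul] using this
  have hdetM : M.det = C.det / (S.det * S.det) := by
    rw [hMdef, Matrix.det_mul, Matrix.det_mul, hSiT, Matrix.det_nonsing_inv, Ring.inverse_eq_inv]
    field_simp
  have hlogA : Real.log A.det = 2 * Real.log S.det := by
    rw [← hdetSS, Real.log_mul hdetS.ne' hdetS.ne']; ring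
  have hlogM : Real.log M.det = Real.log C.det - 2 * Real.log S.det := by
    rw [hdetM, Real.log_div hC.det_pos.ne' (by positivity), Real.log_mul hdetS.ne' hdetS.ne']
    ring
  have hfinal : Real.log (t • A + (1 - t) • C).det
      = Real.log S.det + Real.log N.det + Real.log S.det := by
    rw [key, Matrix.det_mul, Matrix.det_mul, Real.log_mul (by positivity) hdetS.ne',
      Real.log_mul hdetS.ne' hdetNpos.ne']
  rw [hfinal, hlogA]
  rw [hlogM] at hlogN
  linarith

lemma two_trace_le {X Y : Matrix (Fin n) (Fin n) ℝ} :
    2 * (Xᵀ * Y).trace ≤ (Xᵀ * X).trace + (Yᵀ * Y).trace := by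
  simp only [Matrix.trace, Matrix.diag_apply, Matrix.mul_apply, Matrix.transpose_apply]
  rw [← Finset.sum_add_distrib, Finset.mul_sum]
  refine Finset.sum_le_sum fun i _ => ?_
  rw [← Finset.sum_add_distrib, Finset.mul_sum]
  exact Finset.sum_le_sum fun j _ => by nlinarith [sq_nonneg (X j i - Y j i)]

lemma trace_cross_le {K B : Matrix (Fin n) (Fin n) ℝ} (hK : K.PosSemidef) :
    2 * (B * K).trace ≤ K.trace + (B * K * Bᵀ).trace := by
  set S := CFC.sqrt K with hSdef
  have hS : S.PosSemidef := (CFC.sqrt_nonneg K).posSemidef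
  have hSS : S * S = K := CFC.sqrt_mul_sqrt_self K hK.nonneg
  have hSsym : Sᵀ = S := by
    rw [← Matrix.conjTranspose_eq_transpose_of_trivial]; exact hS.1
  have h1 : (Sᵀ * (B * S)).trace = (B * K).trace := by
    rw [hSsym, Matrix.trace_mul_comm, Matrix.mul_assoc, hSS]
  have h2 : (Sᵀ * S).trace = K.trace := by rw [hSsym, hSS]
  have h3 : ((B * S)ᵀ * (B * S)).trace = (B * K * Bᵀ).trace := by
    rw [Matrix.transpose_mul, hSsym, Matrix.trace_mul_comm]
    congr 1
    rw [← hSS]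
    noncomm_ring
  calc 2 * (B * K).trace = 2 * (Sᵀ * (B * S)).trace := by rw [h1]
    _ ≤ (Sᵀ * S).trace + ((B * S)ᵀ * (B * S)).trace := two_trace_le
    _ = K.trace + (B * K * Bᵀ).trace := by rw [h2, h3]

lemma psd_trace_nonneg {M : Matrix (Fin n) (Fin n) ℝ} (hM : M.PosSemidef) : 0 ≤ M.trace := by
  rw [trace_eq_sum_eigs hM.1]
  exact Finset.sum_nonneg fun i _ => hM.eigenvalues_nonneg i

lemma det_le_pow_of_trace_le {M : Matrix (Fin n) (Fin n) ℝ} (hM : M.PosSemidef) {T : ℝ}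
    (hT : M.trace ≤ T) : M.det ≤ T ^ n := by
  rw [det_eq_prod_eigs hM.1]
  have hsum : ∑ i, hM.1.eigenvalues i ≤ T := by rwa [← trace_eq_sum_eigs hM.1]
  have hub : ∀ i, hM.1.eigenvalues i ≤ T := fun i => le_trans
    (Finset.single_le_sum (f := hM.1.eigenvalues) (fun j _ => hM.eigenvalues_nonneg j)
      (Finset.mem_univ i)) hsum
  calc ∏ i, hM.1.eigenvalues i ≤ ∏ _i : Fin n, T :=
        Finset.prod_le_prod (fun i _ => hM.eigenvalues_nonneg i) (fun i _ => hub i)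
    _ = T ^ n := by simp

def capSet {n : ℕ} (K_Z : Matrix (Fin n) (Fin n) ℝ) (P : ℝ) : Set ℝ :=
  {c : ℝ | ∃ K_V B : Matrix (Fin n) (Fin n) ℝ,
    K_V.PosSemidef ∧ (∀ i j : Fin n, i ≤ j → B i j = 0) ∧
    (K_V + B * K_Z * Bᵀ).trace ≤ (n : ℝ) * P ∧
    c = (1 / (2 * (n : ℝ))) *
          Real.log ((K_V + (1 + B) * K_Z * (1 + B)ᵀ).det / K_Z.det)}

lemma det_one_add_lt {B : Matrix (Fin n) (Fin n) ℝ} (hB : ∀ i j, i ≤ j → B i j = 0) :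
    (1 + B).det = 1 := by
  rw [Matrix.det_of_lowerTriangular (1 + B) ?ht]
  · have : ∀ i, (1 + B) i i = 1 := by
      intro i
      simp [Matrix.add_apply, hB i i le_rfl]
    simp [this]
  · intro i j hij
    have hij' : (i : Fin n) < j := hij
    simp [Matrix.add_apply, Matrix.one_apply_ne (ne_of_lt hij'), hB i j hij'.le]

lemma M_posDef {K_Z K_V B : Matrix (Fin n) (Fin n) ℝ} (hKZ : K_Z.PosDef)
    (hV : K_V.PosSemidef) (hB : ∀ i j, i ≤ j → B i j = 0) :
    (K_V + (1 + B) * K_Z * (1 + B)ᵀ).PosDef :=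
  Matrix.PosDef.posSemidef_add hV (posDef_conj hKZ (by rw [det_one_add_lt hB]; exact isUnit_one))

lemma zero_mem_capSet {K_Z : Matrix (Fin n) (Fin n) ℝ} (hKZ : K_Z.PosDef) {P : ℝ}
    (hP : 0 ≤ (n : ℝ) * P) : (0 : ℝ) ∈ capSet K_Z P := by
  refine ⟨0, 0, Matrix.PosSemidef.zero, by simp, by simpa using hP, ?_⟩
  rw [show (0 : Matrix (Fin n) (Fin n) ℝ) + (1 + 0) * K_Z * (1 + 0)ᵀ = K_Z by simp]
  rw [div_self hKZ.det_pos.ne', Real.log_one, mul_zero]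

lemma transpose_eq_self {K_Z : Matrix (Fin n) (Fin n) ℝ} (hKZ : K_Z.IsHermitian) :
    K_Zᵀ = K_Z := by
  rw [← Matrix.conjTranspose_eq_transpose_of_trivial]; exact hKZ

lemma psd_conj {K B : Matrix (Fin n) (Fin n) ℝ} (hK : K.PosSemidef) :
    (B * K * Bᵀ).PosSemidef := by
  have := hK.mul_mul_conjTranspose_same B
  rwa [Matrix.conjTranspose_eq_transpose_of_trivial] at this

lemma bddAbove_capSet {K_Z : Matrix (Fin n) (Fin n) ℝ} (hKZ : K_Z.PosDef) (P : ℝ) :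
    BddAbove (capSet K_Z P) := by
  classical
  set T : ℝ := 2 * ((n : ℝ) * P) + 2 * K_Z.trace with hT
  refine ⟨(1 / (2 * (n : ℝ))) * Real.log (max (T ^ n / K_Z.det) 1), ?_⟩
  rintro c ⟨K_V, B, hV, hB, htr, rfl⟩
  have hKpsd := hKZ.posSemidef
  have hBKB : (B * K_Z * Bᵀ).PosSemidef := psd_conj hKpsd
  have htrV : 0 ≤ K_V.trace := psd_trace_nonneg hV
  have htrBKB : 0 ≤ (B * K_Z * Bᵀ).trace := psd_trace_nonneg hBKB
  have hsplit : (K_V + B * K_Z * Bᵀ).trace = K_V.trace + (B * K_Z * Bᵀ).trace :=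
    Matrix.trace_add _ _
  have hcross : 2 * (B * K_Z).trace ≤ K_Z.trace + (B * K_Z * Bᵀ).trace := trace_cross_le hKpsd
  set M : Matrix (Fin n) (Fin n) ℝ := K_V + (1 + B) * K_Z * (1 + B)ᵀ with hMdef
  have hM : M.PosDef := M_posDef hKZ hV hB
  have hMtr : M.trace ≤ T := by
    have hexp : M = K_V + K_Z + (B * K_Z + (K_Z * Bᵀ + B * K_Z * Bᵀ)) := by
      rw [hMdef, Matrix.transpose_add, Matrix.transpose_one]; noncomm_ring
    have htt : (K_Z * Bᵀ).trace = (B * K_Z).trace := by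
      rw [← Matrix.trace_transpose (K_Z * Bᵀ), Matrix.transpose_mul, Matrix.transpose_transpose,
        transpose_eq_self hKZ.1]
    rw [hexp, Matrix.trace_add, Matrix.trace_add, Matrix.trace_add, Matrix.trace_add, htt]
    rw [hsplit] at htr
    linarith
  have hdetM : M.det ≤ T ^ n := det_le_pow_of_trace_le hM.posSemidef hMtr
  have hcoef : (0 : ℝ) ≤ 1 / (2 * (n : ℝ)) := by positivity
  refine mul_le_mul_of_nonneg_left ?_ hcoef
  have h1 : M.det / K_Z.det ≤ max (T ^ n / K_Z.det) 1 := by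
    refine le_trans ?_ (le_max_left _ _)
    gcongr
    exact hKZ.det_pos.le
  exact Real.log_le_log (div_pos hM.det_pos hKZ.det_pos) h1

lemma pd_smul {A : Matrix (Fin n) (Fin n) ℝ} (hA : A.PosDef) {c : ℝ} (hc : 0 < c) :
    (c • A).PosDef := by
  refine Matrix.posDef_iff_dotProduct_mulVec.mpr ⟨?_, ?_⟩
  · exact (psd_smul hA.posSemidef hc.le).1
  · intro x hx
    have := hA.dotProduct_mulVec_pos hx
    simp only [Matrix.smul_mulVec, dotProduct_smul, smul_eq_mul]
    exact mul_pos hc this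

lemma combo_mem {K_Z : Matrix (Fin n) (Fin n) ℝ} (hKZ : K_Z.PosDef) {P₁ P₂ t a b : ℝ}
    (ht0 : 0 ≤ t) (ht1 : t ≤ 1) (ha : a ∈ capSet K_Z P₁) (hb : b ∈ capSet K_Z P₂) :
    ∃ c ∈ capSet K_Z (t * P₁ + (1 - t) * P₂), t * a + (1 - t) * b ≤ c := by
  classical
  obtain ⟨V₁, B₁, hV₁, hB₁, htr₁, rfl⟩ := ha
  obtain ⟨V₂, B₂, hV₂, hB₂, htr₂, rfl⟩ := hb
  set M₁ := V₁ + (1 + B₁) * K_Z * (1 + B₁)ᵀ with hM₁def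
  set M₂ := V₂ + (1 + B₂) * K_Z * (1 + B₂)ᵀ with hM₂def
  have hM₁ : M₁.PosDef := M_posDef hKZ hV₁ hB₁
  have hM₂ : M₂.PosDef := M_posDef hKZ hV₂ hB₂
  set B' := t • B₁ + (1 - t) • B₂ with hB'def
  set V' := t • V₁ + (1 - t) • V₂ + (t * (1 - t)) • ((B₁ - B₂) * K_Z * (B₁ - B₂)ᵀ)
    with hV'def
  have hV' : V'.PosSemidef :=
    ((psd_smul hV₁ ht0).add (psd_smul hV₂ (by linarith))).add
      (psd_smul (psd_conj hKZ.posSemidef) (by nlinarith))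
  have hB' : ∀ i j : Fin n, i ≤ j → B' i j = 0 := by
    intro i j h
    simp [hB'def, Matrix.add_apply, hB₁ i j h, hB₂ i j h]
  have hid1 : V' + B' * K_Z * B'ᵀ
      = t • (V₁ + B₁ * K_Z * B₁ᵀ) + (1 - t) • (V₂ + B₂ * K_Z * B₂ᵀ) := by
    simp only [hV'def, hB'def, Matrix.transpose_add, Matrix.transpose_smul,
      Matrix.transpose_sub, Matrix.add_mul, Matrix.sub_mul, Matrix.mul_add, Matrix.mul_sub,
      Matrix.smul_mul, Matrix.mul_smul]
    module
  have hid2 : V' + (1 + B') * K_Z * (1 + B')ᵀ = t • M₁ + (1 - t) • M₂ := by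
    rw [hM₁def, hM₂def]
    simp only [hV'def, hB'def, Matrix.transpose_add, Matrix.transpose_smul,
      Matrix.transpose_sub, Matrix.transpose_one, Matrix.add_mul, Matrix.sub_mul,
      Matrix.mul_add, Matrix.mul_sub, Matrix.smul_mul, Matrix.mul_smul,
      Matrix.one_mul, Matrix.mul_one]
    module
  have hcombo : (t • M₁ + (1 - t) • M₂).PosDef := by
    rcases eq_or_lt_of_le ht0 with h | h
    · rw [← h]; simpa using hM₂
    · exact Matrix.PosDef.add_posSemidef (pd_smul hM₁ h)
        (psd_smul hM₂.posSemidef (by linarith))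
  refine ⟨_, ⟨V', B', hV', hB', ?_, rfl⟩, ?_⟩
  · rw [hid1, Matrix.trace_add, Matrix.trace_smul, Matrix.trace_smul, smul_eq_mul, smul_eq_mul]
    have h1 := mul_le_mul_of_nonneg_left htr₁ ht0
    have h2 := mul_le_mul_of_nonneg_left htr₂ (by linarith : (0:ℝ) ≤ 1 - t)
    nlinarith
  · rw [hid2]
    have hcon := logdet_concave hM₁ hM₂ ht0 ht1
    have hd : (0:ℝ) < K_Z.det := hKZ.det_pos
    rw [Real.log_div hM₁.det_pos.ne' hd.ne', Real.log_div hM₂.det_pos.ne' hd.ne',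
      Real.log_div hcombo.det_pos.ne' hd.ne']
    have hcoef : (0 : ℝ) ≤ 1 / (2 * (n : ℝ)) := by positivity
    have := mul_le_mul_of_nonneg_left hcon hcoef
    nlinarith [this]


end Stmt13Aux

lemma CFBn_eq {n : ℕ} (K_Z : Matrix (Fin n) (Fin n) ℝ) (P : ℝ) :
    CFBn K_Z P = sSup (capSet K_Z P) := rfl

/-- **Yanagi–Chen–Yu.** For any symmetric positive definite noise
covariance `K_Z`, the `n`-block feedback capacity is concave in the power `P`. -/
theorem stmt13 (n : ℕ) (K_Z : Matrix (Fin n) (Fin n) ℝ) (hKZ : K_Z.PosDef)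
    (P₁ P₂ t : ℝ) (hP₁ : 0 < P₁) (hP₂ : 0 < P₂) (ht : t ∈ Set.Icc (0 : ℝ) 1) :
    t * CFBn K_Z P₁ + (1 - t) * CFBn K_Z P₂ ≤
      CFBn K_Z (t * P₁ + (1 - t) * P₂) := by
  obtain ⟨ht0, ht1⟩ := ht
  rw [CFBn_eq, CFBn_eq, CFBn_eq]
  set S₁ := capSet K_Z P₁
  set S₂ := capSet K_Z P₂
  set S₃ := capSet K_Z (t * P₁ + (1 - t) * P₂)
  have hne₂ : S₂.Nonempty := ⟨0, zero_mem_capSet hKZ (by positivity)⟩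
  have hne₁ : S₁.Nonempty := ⟨0, zero_mem_capSet hKZ (by positivity)⟩
  have bdd₃ : BddAbove S₃ := bddAbove_capSet hKZ _
  have key : ∀ a ∈ S₁, ∀ b ∈ S₂, t * a + (1 - t) * b ≤ sSup S₃ := by
    intro a ha b hb
    obtain ⟨c, hc, hle⟩ := combo_mem hKZ ht0 ht1 ha hb
    exact hle.trans (le_csSup bdd₃ hc)
  have h2 : ∀ a ∈ S₁, t * a + (1 - t) * sSup S₂ ≤ sSup S₃ := by
    intro a ha
    rcases eq_or_lt_of_le ht1 with h | h
    · have hz : (0:ℝ) ∈ S₂ := zero_mem_capSet hKZ (by positivity)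
      have hk := key a ha 0 hz
      subst h
      simpa using hk
    · have h1t : (0:ℝ) < 1 - t := by linarith
      have hs2 : sSup S₂ ≤ (sSup S₃ - t * a) / (1 - t) := by
        refine csSup_le hne₂ fun b hb => ?_
        rw [le_div_iff₀ h1t]
        have := key a ha b hb
        linarith
      have := mul_le_mul_of_nonneg_left hs2 h1t.le
      rw [mul_div_cancel₀ _ h1t.ne'] at this
      linarith
  rcases eq_or_lt_of_le ht0 with h | h
  · obtain ⟨a0, ha0⟩ := hne₁
    have := h2 a0 ha0
    rw [← h] at this ⊢
    simpa using this
  · have hs1 : sSup S₁ ≤ (sSup S₃ - (1 - t) * sSup S₂) / t := by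
      refine csSup_le hne₁ fun a ha => ?_
      rw [le_div_iff₀ h]
      have := h2 a ha
      linarith
    have := mul_le_mul_of_nonneg_left hs1 h.le
    rw [mul_div_cancel₀ _ h.ne'] at this
    linarith
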